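/- arXiv:2106.05533 — 3 statements merged into one kernel-verified Lean document; each statement's English description precedes it below -/
import Mathlib

section
/- Let ρ₀ be an n×n Hermitian matrix with orthonormal eigenbasis (φ_k) and eigenvalues (λ_k), let ν be an n×n Hermitian matrix with ker ρ₀ ⊆ ker ν, and let f : ℝ → ℝ be twice continuously differentiable at each eigenvalue λ_k. Then Tr[D²_f(ρ₀,ν)] = Tr[ν · L_{f′}(ρ₀,ν)], where L_{f′} is the Fréchet derivative associated with the derivative function f′. -/
open Matrix
open scoped ComplexOrder

noncomputable section

/-- Hilbert–Schmidt (Frobenius) norm of a complex matrix. -/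
def hsNorm {ι κ : Type*} [Fintype ι] [Fintype κ] (A : Matrix ι κ ℂ) : ℝ :=
  Real.sqrt (∑ i, ∑ j, ‖A i j‖ ^ 2)

/-- First divided difference `[f,λ]^{[1]}_{k,l}`. -/
def dd1 {n : ℕ} (f : ℝ → ℝ) (lam : Fin n → ℝ) (k l : Fin n) : ℝ :=
  if lam k = lam l then deriv f (lam k)
  else (f (lam k) - f (lam l)) / (lam k - lam l)

/-- Second divided difference `[f,λ]^{[2]}_{k,l,m}`. -/
def dd2 {n : ℕ} (f : ℝ → ℝ) (lam : Fin n → ℝ) (k l m : Fin n) : ℝ :=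
  if lam k = lam m then
    if lam k = lam l then deriv (deriv f) (lam k) / 2
    else (deriv f (lam k) - dd1 f lam k l) / (lam k - lam l)
  else (dd1 f lam k l - dd1 f lam m l) / (lam k - lam m)

/-- The Fréchet derivative `L_f(A,E) = Σ_{k,l} [f,λ]^{[1]}_{k,l} ⟨φ_k, E φ_l⟩ |φ_k⟩⟨φ_l|`,
where the orthonormal eigenbasis `(φ_k)` of `A` is given by the columns of the unitary `U`
and `lam` are the corresponding eigenvalues. -/
def frechet {n : ℕ} (f : ℝ → ℝ) (U : Matrix (Fin n) (Fin n) ℂ) (lam : Fin n → ℝ)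
    (E : Matrix (Fin n) (Fin n) ℂ) : Matrix (Fin n) (Fin n) ℂ :=
  U * (Matrix.of fun k l => (dd1 f lam k l : ℂ) * ((Uᴴ * E * U) k l)) * Uᴴ

/-- The second matrix derivative
`D²_f(A,E) = 2 Σ_{k,l,m} [f,λ]^{[2]}_{k,l,m} ⟨φ_k, E φ_l⟩⟨φ_l, E φ_m⟩ |φ_k⟩⟨φ_m|`. -/
def matD2 {n : ℕ} (f : ℝ → ℝ) (U : Matrix (Fin n) (Fin n) ℂ) (lam : Fin n → ℝ)
    (E : Matrix (Fin n) (Fin n) ℂ) : Matrix (Fin n) (Fin n) ℂ :=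
  U * (Matrix.of fun k m =>
    2 * ∑ l, (dd2 f lam k l m : ℂ) * ((Uᴴ * E * U) k l) * ((Uᴴ * E * U) l m)) * Uᴴ

/-- Primary matrix function `f(A) = Σ_k f(λ_k)|φ_k⟩⟨φ_k|` in the eigenbasis given by `U`. -/
def pmfun {n : ℕ} (f : ℝ → ℝ) (U : Matrix (Fin n) (Fin n) ℂ) (lam : Fin n → ℝ) :
    Matrix (Fin n) (Fin n) ℂ :=
  U * Matrix.diagonal (fun k => (f (lam k) : ℂ)) * Uᴴ

/-- Primary matrix function of a Hermitian matrix: matrix power `A^s` (with `0^s = 0` for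
`s ≠ 0`), given by the continuous functional calculus. -/
def mpow {ι : Type*} [Fintype ι] [DecidableEq ι] (s : ℝ) (A : Matrix ι ι ℂ) : Matrix ι ι ℂ :=
  cfc (fun x : ℝ => x ^ s) A

/-- Primary-matrix-function logarithm (`log 0 = 0` on the kernel). -/
def mlog {ι : Type*} [Fintype ι] [DecidableEq ι] (A : Matrix ι ι ℂ) : Matrix ι ι ℂ :=
  cfc Real.log A

/-- Primary-matrix-function square root; agrees with the positive semidefinite square root on
positive semidefinite matrices. -/
def msqrt {ι : Type*} [Fintype ι] [DecidableEq ι] (A : Matrix ι ι ℂ) : Matrix ι ι ℂ :=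
  cfc Real.sqrt A

/-- Von Neumann entropy `S(ρ) = −Tr[ρ log ρ]` (with `0 log 0 = 0`). -/
def vnEntropy {n : ℕ} (ρ : Matrix (Fin n) (Fin n) ℂ) : ℝ :=
  -(Matrix.trace (cfc (fun x : ℝ => x * Real.log x) ρ)).re

/-- Quantum relative entropy `D(ρ₁‖ρ₂) = Tr[ρ₁ (log ρ₁ − log ρ₂)]`. -/
def qre {n : ℕ} (ρ₁ ρ₂ : Matrix (Fin n) (Fin n) ℂ) : ℝ :=
  (Matrix.trace (ρ₁ * (mlog ρ₁ - mlog ρ₂))).re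

/-- `ξ_s(ρ₁,ρ₂) = −log Tr[ρ₁^s ρ₂^{1−s}]`. -/
def xiS {n : ℕ} (s : ℝ) (ρ₁ ρ₂ : Matrix (Fin n) (Fin n) ℂ) : ℝ :=
  -Real.log ((Matrix.trace (mpow s ρ₁ * mpow (1 - s) ρ₂)).re)

/-- Quantum fidelity `F(ρ₁,ρ₂) = (Tr[√(√ρ₁ ρ₂ √ρ₁)])²`. -/
def fidelity {n : ℕ} (ρ₁ ρ₂ : Matrix (Fin n) (Fin n) ℂ) : ℝ :=
  ((Matrix.trace (msqrt (msqrt ρ₁ * ρ₂ * msqrt ρ₁))).re) ^ 2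

/-- Squared Bures distance `d_B²(ρ₁,ρ₂) = 2(1 − √F(ρ₁,ρ₂))`. -/
def buresSq {n : ℕ} (ρ₁ ρ₂ : Matrix (Fin n) (Fin n) ℂ) : ℝ :=
  2 * (1 - Real.sqrt (fidelity ρ₁ ρ₂))

/-- The upper-left `m×m` block of a matrix written in the eigenbasis of the unperturbed state. -/
def blockB {n : ℕ} (m : ℕ) (M : Matrix (Fin n) (Fin n) ℂ) :
    Matrix {k : Fin n // k.val < m} {k : Fin n // k.val < m} ℂ :=
  Matrix.of fun k l => M k.val l.val

/-- The upper-right block. -/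
def blockC {n : ℕ} (m : ℕ) (M : Matrix (Fin n) (Fin n) ℂ) :
    Matrix {k : Fin n // k.val < m} {k : Fin n // m ≤ k.val} ℂ :=
  Matrix.of fun k l => M k.val l.val

/-- The lower-left block. -/
def blockC' {n : ℕ} (m : ℕ) (M : Matrix (Fin n) (Fin n) ℂ) :
    Matrix {k : Fin n // m ≤ k.val} {k : Fin n // k.val < m} ℂ :=
  Matrix.of fun k l => M k.val l.val

/-- The lower-right block. -/
def blockD {n : ℕ} (m : ℕ) (M : Matrix (Fin n) (Fin n) ℂ) :
    Matrix {k : Fin n // m ≤ k.val} {k : Fin n // m ≤ k.val} ℂ :=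
  Matrix.of fun k l => M k.val l.val

/-- The extended first divided difference `[x^s,λ]^{[1,0]}_{k,l}`. -/
def dd10 {n : ℕ} (s : ℝ) (lam : Fin n → ℝ) (k l : Fin n) : ℝ :=
  if lam k = lam l then (if lam k = 0 then 1 else s * lam k ^ (s - 1))
  else (lam k ^ s - lam l ^ s) / (lam k - lam l)

/-- The first-order term `G` in the support-extending expansion of `(ρ₀+ν)^s`:
in the eigenbasis of `ρ₀` (given by the unitary `U` with eigenvalues `lam`, positive
eigenvalues listed first), it is the Hadamard product of `[x^s,λ]^{[1,0]}` with the block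
matrix `[[ν_B, ν_C],[ν_C†, ν_D^s]]`. -/
def Gmat {n : ℕ} (s : ℝ) (m : ℕ) (U : Matrix (Fin n) (Fin n) ℂ) (lam : Fin n → ℝ)
    (ν : Matrix (Fin n) (Fin n) ℂ) : Matrix (Fin n) (Fin n) ℂ :=
  U * (Matrix.of fun k l =>
    (dd10 s lam k l : ℂ) *
      (if hk : m ≤ k.val then
        if hl : m ≤ l.val then
          mpow s (blockD m (Uᴴ * ν * U)) ⟨k, hk⟩ ⟨l, hl⟩
        else (Uᴴ * ν * U) k l
      else (Uᴴ * ν * U) k l)) * Uᴴ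

/-- Fréchet derivative restricted to the support block (`H₊`): the matrix
`Σ_{k,l<m} [f,λ]^{[1]}_{k,l} ⟨φ_k, ν φ_l⟩ |φ_k⟩⟨φ_l|` written as an `m×m` block. -/
def frechetB {n : ℕ} (m : ℕ) (f : ℝ → ℝ) (lam : Fin n → ℝ)
    (νhat : Matrix (Fin n) (Fin n) ℂ) :
    Matrix {k : Fin n // k.val < m} {k : Fin n // k.val < m} ℂ :=
  Matrix.of fun k l => (dd1 f lam k.val l.val : ℂ) * νhat k.val l.val

private lemma dd2_key {n : ℕ} (f : ℝ → ℝ) (lam : Fin n → ℝ) (k l : Fin n) :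
    2 * dd2 f lam k l k + 2 * dd2 f lam l k l
      = dd1 (deriv f) lam l k + dd1 (deriv f) lam k l := by
  unfold dd2 dd1
  rcases eq_or_ne (lam k) (lam l) with h | h
  · simp [h]; ring
  · have h' := h.symm
    have hs : lam k - lam l ≠ 0 := sub_ne_zero.mpr h
    have hs' : lam l - lam k ≠ 0 := sub_ne_zero.mpr h'
    simp only [if_pos rfl, if_neg h, if_neg h', eq_self_iff_true, if_true]
    field_simp
    ring

/-- `Tr[D²_f(ρ₀,ν)] = Tr[ν L_{f′}(ρ₀,ν)]` for support-preserving
perturbations. -/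
theorem trace_matD2_eq_trace_mul_frechet_deriv {n : ℕ} (ρ₀ : Matrix (Fin n) (Fin n) ℂ)
    (hρ₀ : ρ₀.IsHermitian)
    (U : Matrix (Fin n) (Fin n) ℂ) (hU : U ∈ Matrix.unitaryGroup (Fin n) ℂ)
    (lam : Fin n → ℝ)
    (hdecomp : ρ₀ = U * Matrix.diagonal (fun k => (lam k : ℂ)) * Uᴴ)
    (ν : Matrix (Fin n) (Fin n) ℂ) (hν : ν.IsHermitian)
    (hker : ∀ x : Fin n → ℂ, ρ₀ *ᵥ x = 0 → ν *ᵥ x = 0)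
    (f : ℝ → ℝ) (hf : ∀ k, ContDiffAt ℝ 2 f (lam k)) :
    Matrix.trace (matD2 f U lam ν) = Matrix.trace (ν * frechet (deriv f) U lam ν) := by
  classical
  have hUi : Uᴴ * U = 1 := by
    have := Matrix.mem_unitaryGroup_iff'.mp hU
    simpa [Matrix.star_eq_conjTranspose] using this
  set V : Matrix (Fin n) (Fin n) ℂ := Uᴴ * ν * U with hV
  have hL : Matrix.trace (matD2 f U lam ν)
      = ∑ k, ∑ l, (2 : ℂ) * (dd2 f lam k l k : ℂ) * (V k l * V l k) := by
    unfold matD2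
    rw [Matrix.trace_mul_comm, ← Matrix.mul_assoc, hUi, Matrix.one_mul]
    simp only [Matrix.trace, Matrix.diag_apply, Matrix.of_apply, ← hV]
    refine Finset.sum_congr rfl fun k _ => ?_
    rw [Finset.mul_sum]
    refine Finset.sum_congr rfl fun l _ => ?_
    ring
  have hR : Matrix.trace (ν * frechet (deriv f) U lam ν)
      = ∑ k, ∑ l, (dd1 (deriv f) lam l k : ℂ) * (V k l * V l k) := by
    unfold frechet
    rw [← Matrix.mul_assoc, ← Matrix.mul_assoc, Matrix.trace_mul_comm,
      ← Matrix.mul_assoc, ← Matrix.mul_assoc, ← hV]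
    simp only [Matrix.trace, Matrix.diag_apply, Matrix.mul_apply, Matrix.of_apply]
    refine Finset.sum_congr rfl fun k _ => ?_
    refine Finset.sum_congr rfl fun l _ => ?_
    ring
  rw [hL, hR]
  have hkey : ∀ k l : Fin n,
      (2 : ℂ) * (dd2 f lam k l k : ℂ) + 2 * (dd2 f lam l k l : ℂ)
        = (dd1 (deriv f) lam l k : ℂ) + (dd1 (deriv f) lam k l : ℂ) := by
    intro k l
    exact_mod_cast congrArg (fun x : ℝ => (x : ℂ)) (dd2_key f lam k l)
  have h2 : (2 : ℂ) * (∑ k, ∑ l, (2 : ℂ) * (dd2 f lam k l k : ℂ) * (V k l * V l k))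
      = 2 * (∑ k, ∑ l, (dd1 (deriv f) lam l k : ℂ) * (V k l * V l k)) := by
    have hswapA : (∑ k, ∑ l, (2 : ℂ) * (dd2 f lam k l k : ℂ) * (V k l * V l k))
        = ∑ k, ∑ l, (2 : ℂ) * (dd2 f lam l k l : ℂ) * (V l k * V k l) := Finset.sum_comm
    have hswapB : (∑ k, ∑ l, (dd1 (deriv f) lam l k : ℂ) * (V k l * V l k))
        = ∑ k, ∑ l, (dd1 (deriv f) lam k l : ℂ) * (V l k * V k l) := Finset.sum_comm
    calc (2 : ℂ) * (∑ k, ∑ l, (2 : ℂ) * (dd2 f lam k l k : ℂ) * (V k l * V l k))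
        = (∑ k, ∑ l, (2 : ℂ) * (dd2 f lam k l k : ℂ) * (V k l * V l k))
          + ∑ k, ∑ l, (2 : ℂ) * (dd2 f lam l k l : ℂ) * (V l k * V k l) := by
          rw [← hswapA]; ring
      _ = ∑ k, ∑ l, (((2 : ℂ) * (dd2 f lam k l k : ℂ) + 2 * (dd2 f lam l k l : ℂ))
            * (V k l * V l k)) := by
          rw [← Finset.sum_add_distrib]
          refine Finset.sum_congr rfl fun k _ => ?_
          rw [← Finset.sum_add_distrib]
          refine Finset.sum_congr rfl fun l _ => ?_
          ring
      _ = ∑ k, ∑ l, (((dd1 (deriv f) lam l k : ℂ) + (dd1 (deriv f) lam k l : ℂ))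
            * (V k l * V l k)) := by
          refine Finset.sum_congr rfl fun k _ => Finset.sum_congr rfl fun l _ => ?_
          rw [hkey]
      _ = (∑ k, ∑ l, (dd1 (deriv f) lam l k : ℂ) * (V k l * V l k))
          + ∑ k, ∑ l, (dd1 (deriv f) lam k l : ℂ) * (V l k * V k l) := by
          rw [← Finset.sum_add_distrib]
          refine Finset.sum_congr rfl fun k _ => ?_
          rw [← Finset.sum_add_distrib]
          refine Finset.sum_congr rfl fun l _ => ?_
          ring
      _ = 2 * (∑ k, ∑ l, (dd1 (deriv f) lam l k : ℂ) * (V k l * V l k)) := by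
          rw [← hswapB]; ring
  exact mul_left_cancel₀ two_ne_zero h2

end
end

section
/- Let ρ₀ be an n×n Hermitian matrix with orthonormal eigenbasis (φ_k) and eigenvalues (λ_k), let ν be an n×n Hermitian matrix with ker ρ₀ ⊆ ker ν, and let f : ℝ → ℝ be twice continuously differentiable at each eigenvalue λ_k with f′(λ_k) ≠ 0 for all k. Then Tr[f′(ρ₀)^{-1} · D²_f(ρ₀,ν)] = −Tr[L_{1/f′}(ρ₀,ν) · L_f(ρ₀,ν)], where f′(ρ₀)^{-1} = Σ_k f′(λ_k)^{-1}|φ_k⟩⟨φ_k| and L_{1/f′} is the Fréchet derivative associated with the function x ↦ 1/f′(x). -/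
open Matrix
open scoped ComplexOrder

noncomputable section

lemma diffAt_deriv {f : ℝ → ℝ} {a : ℝ} (hf : ContDiffAt ℝ 2 f a) :
    DifferentiableAt ℝ (deriv f) a := by
  have h := hf.fderiv_right (m := 1) (by norm_num)
  have h2 : DifferentiableAt ℝ (fun x => fderiv ℝ f x 1) a :=
    (h.differentiableAt one_ne_zero).clm_apply (differentiableAt_const _)
  have : deriv f = fun x => fderiv ℝ f x 1 := funext fun x => (fderiv_apply_one_eq_deriv).symm
  rw [this]; exact h2

lemma key_zero {n : ℕ} (f : ℝ → ℝ) (lam : Fin n → ℝ) (k l : Fin n)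
    (h2 : ∀ j, ContDiffAt ℝ 2 f (lam j)) (hf' : ∀ j, deriv f (lam j) ≠ 0) :
    2 * (deriv f (lam k))⁻¹ * dd2 f lam k l k
      + dd1 (fun x => (deriv f x)⁻¹) lam k l * dd1 f lam l k
    + (2 * (deriv f (lam l))⁻¹ * dd2 f lam l k l
      + dd1 (fun x => (deriv f x)⁻¹) lam l k * dd1 f lam k l) = 0 := by
  by_cases h : lam k = lam l
  · have hd : deriv (fun x => (deriv f x)⁻¹) (lam l)
        = -deriv (deriv f) (lam l) / deriv f (lam l) ^ 2 :=
      deriv_inv'' (diffAt_deriv (h2 l)) (hf' l)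
    simp only [dd1, dd2, h, if_pos rfl, hd, ↓reduceIte]
    field_simp [hf' l]
    ring
  · have hkl : lam k - lam l ≠ 0 := sub_ne_zero.mpr h
    have hlk : lam l - lam k ≠ 0 := sub_ne_zero.mpr (Ne.symm h)
    have H : ∀ a b x y fk fl : ℝ, a ≠ 0 → b ≠ 0 → x - y ≠ 0 →
        2 * a⁻¹ * ((a - (fk - fl) / (x - y)) / (x - y))
          + (a⁻¹ - b⁻¹) / (x - y) * ((fl - fk) / (y - x))
          + (2 * b⁻¹ * ((b - (fl - fk) / (y - x)) / (y - x))
          + (b⁻¹ - a⁻¹) / (y - x) * ((fk - fl) / (x - y))) = 0 := by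
      intro a b x y fk fl ha hb hxy
      have hyx : y - x ≠ 0 := fun hc => hxy (by linarith [sub_eq_zero.mp hc])
      field_simp
      ring
    simp only [dd1, dd2, if_pos rfl, if_neg h, if_neg (Ne.symm h)]
    exact H (deriv f (lam k)) (deriv f (lam l)) (lam k) (lam l) (f (lam k)) (f (lam l))
      (hf' k) (hf' l) hkl


/-- `Tr[f′(ρ₀)⁻¹ D²_f(ρ₀,ν)] = −Tr[L_{1/f′}(ρ₀,ν) L_f(ρ₀,ν)]` for
support-preserving perturbations. -/
theorem trace_inv_deriv_mul_matD2 {n : ℕ} (ρ₀ : Matrix (Fin n) (Fin n) ℂ)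
    (hρ₀ : ρ₀.IsHermitian)
    (U : Matrix (Fin n) (Fin n) ℂ) (hU : U ∈ Matrix.unitaryGroup (Fin n) ℂ)
    (lam : Fin n → ℝ)
    (hdecomp : ρ₀ = U * Matrix.diagonal (fun k => (lam k : ℂ)) * Uᴴ)
    (ν : Matrix (Fin n) (Fin n) ℂ) (hν : ν.IsHermitian)
    (hker : ∀ x : Fin n → ℂ, ρ₀ *ᵥ x = 0 → ν *ᵥ x = 0)
    (f : ℝ → ℝ) (hf : ∀ k, ContDiffAt ℝ 2 f (lam k))
    (hf' : ∀ k, deriv f (lam k) ≠ 0) :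
    Matrix.trace (pmfun (fun x => (deriv f x)⁻¹) U lam * matD2 f U lam ν)
      = -Matrix.trace (frechet (fun x => (deriv f x)⁻¹) U lam ν * frechet f U lam ν) := by
  classical
  have hUU : Uᴴ * U = 1 := by
    simpa [Matrix.star_eq_conjTranspose] using Matrix.mem_unitaryGroup_iff'.mp hU
  have cancel : ∀ X : Matrix (Fin n) (Fin n) ℂ, Uᴴ * (U * X) = X := fun X => by
    rw [← Matrix.mul_assoc, hUU, Matrix.one_mul]
  have conj_tr : ∀ A B : Matrix (Fin n) (Fin n) ℂ,
      Matrix.trace (U * A * Uᴴ * (U * B * Uᴴ)) = Matrix.trace (A * B) := by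
    intro A B
    have e1 : U * A * Uᴴ * (U * B * Uᴴ) = U * (A * B) * Uᴴ := by
      simp only [Matrix.mul_assoc]; rw [cancel (B * Uᴴ)]
    rw [e1, Matrix.trace_mul_cycle, ← Matrix.mul_assoc, hUU, Matrix.one_mul]
  unfold pmfun matD2 frechet
  set N : Matrix (Fin n) (Fin n) ℂ := Uᴴ * ν * U with hN
  rw [conj_tr, conj_tr]
  simp only [Matrix.trace, Matrix.diag, Matrix.mul_apply, Matrix.of_apply,
    Matrix.diagonal_apply, ite_mul, zero_mul, Finset.sum_ite_eq, Finset.mem_univ, if_true]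
  rw [eq_neg_iff_add_eq_zero, ← Finset.sum_add_distrib]
  set F : Fin n → Fin n → ℂ := fun k l =>
    ((2 * (deriv f (lam k))⁻¹ * dd2 f lam k l k
        + dd1 (fun x => (deriv f x)⁻¹) lam k l * dd1 f lam l k : ℝ) : ℂ)
      * (N k l * N l k) with hF
  have step : ∀ k : Fin n,
      (((deriv f (lam k))⁻¹ : ℝ) : ℂ) * (2 * ∑ l, (dd2 f lam k l k : ℂ) * N k l * N l k)
        + ∑ l, (dd1 (fun x => (deriv f x)⁻¹) lam k l : ℂ) * N k l
            * ((dd1 f lam l k : ℂ) * N l k)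
      = ∑ l, F k l := by
    intro k
    rw [Finset.mul_sum, Finset.mul_sum, ← Finset.sum_add_distrib]
    refine Finset.sum_congr rfl fun l _ => ?_
    simp only [hF]
    push_cast
    ring
  rw [Finset.sum_congr rfl fun k _ => step k]
  have hanti : ∀ k l, F l k = -F k l := by
    intro k l
    have h0 := key_zero f lam k l hf hf'
    have h1 : (2 * (deriv f (lam l))⁻¹ * dd2 f lam l k l
        + dd1 (fun x => (deriv f x)⁻¹) lam l k * dd1 f lam k l : ℝ)
      = -(2 * (deriv f (lam k))⁻¹ * dd2 f lam k l k
        + dd1 (fun x => (deriv f x)⁻¹) lam k l * dd1 f lam l k) := by linarith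
    simp only [hF, h1]
    push_cast
    ring
  have h3 : (∑ k, ∑ l, F k l) = -∑ k, ∑ l, F k l := by
    calc (∑ k, ∑ l, F k l) = ∑ l, ∑ k, F k l := Finset.sum_comm
    _ = ∑ l, ∑ k, -F l k := by
        refine Finset.sum_congr rfl fun l _ => Finset.sum_congr rfl fun k _ => ?_
        rw [hanti l k]
    _ = -∑ k, ∑ l, F k l := by simp
  have h4 : (2 : ℂ) * (∑ k, ∑ l, F k l) = 0 := by
    rw [two_mul]; nth_rewrite 2 [h3]; ring
  have := mul_eq_zero.mp h4
  simpa using this.resolve_left two_ne_zero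


end
end

section
/- Let ρ₀ be an n×n positive definite density matrix and let ν be an n×n Hermitian matrix. Then for every s ∈ [0,1], Tr[L_{x^s}(ρ₀,ν) · L_{x^{1−s}}(ρ₀,ν)] ≤ Tr[L_{√x}(ρ₀,ν)²], where L_{x^s}, L_{x^{1−s}}, and L_{√x} are the Fréchet derivatives associated with the functions x ↦ x^s, x ↦ x^{1−s}, and x ↦ √x. In particular, the second-order coefficient ξ_s in the quantum Chernoff bound expansion is maximized at s = 1/2. -/
open Matrix
open scoped ComplexOrder

noncomputable section

lemma dd1_symm {n : ℕ} (f : ℝ → ℝ) (lam : Fin n → ℝ) (k l : Fin n) :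
    dd1 f lam l k = dd1 f lam k l := by
  unfold dd1
  by_cases h : lam k = lam l
  · rw [if_pos h.symm, if_pos h, h]
  · rw [if_neg (fun h' => h h'.symm), if_neg h, ← neg_sub (f (lam k)), ← neg_sub (lam k),
      neg_div_neg_eq]

lemma key_ineq (s a b : ℝ) (ha : 0 < a) (hb : 0 < b) :
    (if a = b then deriv (fun x : ℝ => x ^ s) a else (a ^ s - b ^ s) / (a - b)) *
      (if a = b then deriv (fun x : ℝ => x ^ (1 - s)) a else (a ^ (1 - s) - b ^ (1 - s)) / (a - b))
      ≤ (if a = b then deriv Real.sqrt a else (Real.sqrt a - Real.sqrt b) / (a - b)) *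
        (if a = b then deriv Real.sqrt a else (Real.sqrt a - Real.sqrt b) / (a - b)) := by
  by_cases h : a = b
  · simp only [if_pos h]
    rw [Real.deriv_rpow_const a s, Real.deriv_rpow_const a (1 - s),
      (Real.hasDerivAt_sqrt ha.ne').deriv]
    have h1 : a ^ (s - 1) * a ^ (1 - s - 1) = a⁻¹ := by
      rw [← Real.rpow_add ha, show s - 1 + (1 - s - 1) = -1 by ring, Real.rpow_neg_one]
    have hsq : Real.sqrt a * Real.sqrt a = a := Real.mul_self_sqrt ha.le
    have h2 : (1 / (2 * Real.sqrt a)) * (1 / (2 * Real.sqrt a)) = 1 / 4 * a⁻¹ := by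
      field_simp
      nlinarith [hsq]
    have h3 : s * a ^ (s - 1) * ((1 - s) * a ^ (1 - s - 1)) = (s * (1 - s)) * a⁻¹ := by
      rw [← h1]; ring
    rw [h2, h3]
    have h4 : s * (1 - s) ≤ 1 / 4 := by nlinarith [sq_nonneg (s - 1 / 2)]
    exact mul_le_mul_of_nonneg_right h4 (inv_nonneg.2 ha.le)
  · simp only [if_neg h]
    have hab : a - b ≠ 0 := sub_ne_zero.mpr h
    have hab2 : 0 < (a - b) * (a - b) := by
      rcases lt_or_gt_of_ne hab with h' | h' <;> nlinarith
    rw [div_mul_div_comm, div_mul_div_comm, div_le_div_iff₀ hab2 hab2]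
    have hnum : (a ^ s - b ^ s) * (a ^ (1 - s) - b ^ (1 - s))
        ≤ (Real.sqrt a - Real.sqrt b) * (Real.sqrt a - Real.sqrt b) := by
      have e1 : a ^ s * a ^ (1 - s) = a := by rw [← Real.rpow_add ha]; norm_num
      have e2 : b ^ s * b ^ (1 - s) = b := by rw [← Real.rpow_add hb]; norm_num
      have hsa : Real.sqrt a * Real.sqrt a = a := Real.mul_self_sqrt ha.le
      have hsb : Real.sqrt b * Real.sqrt b = b := Real.mul_self_sqrt hb.le
      have hx : 0 < a ^ s * b ^ (1 - s) := by positivity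
      have hy : 0 < a ^ (1 - s) * b ^ s := by positivity
      have ht : 0 ≤ Real.sqrt a * Real.sqrt b := by positivity
      have hxy : (a ^ s * b ^ (1 - s)) * (a ^ (1 - s) * b ^ s)
          = (Real.sqrt a * Real.sqrt b) * (Real.sqrt a * Real.sqrt b) := by
        calc (a ^ s * b ^ (1 - s)) * (a ^ (1 - s) * b ^ s)
            = (a ^ s * a ^ (1 - s)) * (b ^ s * b ^ (1 - s)) := by ring
          _ = a * b := by rw [e1, e2]
          _ = (Real.sqrt a * Real.sqrt b) * (Real.sqrt a * Real.sqrt b) := by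
              rw [show (Real.sqrt a * Real.sqrt b) * (Real.sqrt a * Real.sqrt b)
                  = (Real.sqrt a * Real.sqrt a) * (Real.sqrt b * Real.sqrt b) by ring, hsa, hsb]
      have hsum : 2 * (Real.sqrt a * Real.sqrt b)
          ≤ a ^ s * b ^ (1 - s) + a ^ (1 - s) * b ^ s := by
        nlinarith [sq_nonneg (a ^ s * b ^ (1 - s) - Real.sqrt a * Real.sqrt b)]
      nlinarith [e1, e2, hsa, hsb, hsum]
    nlinarith [hnum, hab2]

/-- The second-order quantum Chernoff coefficient is maximized at `s = 1/2`:
`Tr[L_{x^s}(ρ₀,ν) L_{x^{1−s}}(ρ₀,ν)] ≤ Tr[L_{√x}(ρ₀,ν)²]`. -/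
theorem trace_frechet_pow_le_frechet_sqrt_sq {n : ℕ} (ρ₀ : Matrix (Fin n) (Fin n) ℂ)
    (hρ₀ : ρ₀.PosDef) (htr : ρ₀.trace = 1)
    (U : Matrix (Fin n) (Fin n) ℂ) (hU : U ∈ Matrix.unitaryGroup (Fin n) ℂ)
    (lam : Fin n → ℝ)
    (hdecomp : ρ₀ = U * Matrix.diagonal (fun k => (lam k : ℂ)) * Uᴴ)
    (ν : Matrix (Fin n) (Fin n) ℂ) (hν : ν.IsHermitian)
    (s : ℝ) (hs : s ∈ Set.Icc (0 : ℝ) 1) :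
    (Matrix.trace (frechet (fun x : ℝ => x ^ s) U lam ν
        * frechet (fun x : ℝ => x ^ (1 - s)) U lam ν)).re
      ≤ (Matrix.trace (frechet Real.sqrt U lam ν * frechet Real.sqrt U lam ν)).re := by
  classical
  have hU1 : Uᴴ * U = 1 := by
    simpa only [Matrix.star_eq_conjTranspose] using hU.1
  -- positivity of eigenvalues
  have hlam : ∀ k, 0 < lam k := by
    have hPD : (Uᴴ * ρ₀ * U).PosDef := by
      refine Matrix.PosDef.of_dotProduct_mulVec_pos (Matrix.isHermitian_conjTranspose_mul_mul U hρ₀.1) fun x hx => ?_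
      have hx' : U *ᵥ x ≠ 0 := by
        intro h0
        apply hx
        have h1 : Uᴴ *ᵥ (U *ᵥ x) = x := by
          rw [Matrix.mulVec_mulVec, hU1, Matrix.one_mulVec]
        rw [h0, Matrix.mulVec_zero] at h1
        exact h1.symm
      simpa only [Matrix.star_mulVec, Matrix.dotProduct_mulVec, Matrix.vecMul_vecMul]
        using hρ₀.dotProduct_mulVec_pos hx'
    have hdiag : (Matrix.diagonal fun k => (lam k : ℂ)) = Uᴴ * ρ₀ * U := by
      rw [hdecomp]
      simp only [← Matrix.mul_assoc]
      rw [hU1, Matrix.one_mul, Matrix.mul_assoc, hU1, Matrix.mul_one]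
    rw [← hdiag] at hPD
    intro k
    have hk := (Matrix.posDef_diagonal_iff.mp hPD) k
    exact_mod_cast hk
  -- trace formula
  have key_tr : ∀ f g : ℝ → ℝ,
      (Matrix.trace (frechet f U lam ν * frechet g U lam ν)).re
        = ∑ k, ∑ l, dd1 f lam k l * dd1 g lam k l * Complex.normSq ((Uᴴ * ν * U) k l) := by
    intro f g
    set M1 : Matrix (Fin n) (Fin n) ℂ :=
      Matrix.of fun k l => (dd1 f lam k l : ℂ) * ((Uᴴ * ν * U) k l) with hM1
    set M2 : Matrix (Fin n) (Fin n) ℂ :=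
      Matrix.of fun k l => (dd1 g lam k l : ℂ) * ((Uᴴ * ν * U) k l) with hM2
    have hherm : ∀ k l, (Uᴴ * ν * U) l k = starRingEnd ℂ ((Uᴴ * ν * U) k l) := by
      intro k l
      have h : (Uᴴ * ν * U)ᴴ = Uᴴ * ν * U := Matrix.isHermitian_conjTranspose_mul_mul U hν
      conv_lhs => rw [← h]
      simp [Matrix.conjTranspose_apply]
    have hprod : frechet f U lam ν * frechet g U lam ν = U * (M1 * M2 * Uᴴ) := by
      show U * M1 * Uᴴ * (U * M2 * Uᴴ) = _
      simp only [Matrix.mul_assoc]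
      rw [← Matrix.mul_assoc Uᴴ U, hU1, Matrix.one_mul]
    rw [hprod, Matrix.trace_mul_comm U (M1 * M2 * Uᴴ), Matrix.mul_assoc, hU1, Matrix.mul_one]
    have htr2 : Matrix.trace (M1 * M2) = ∑ k, ∑ l, M1 k l * M2 l k := by
      simp [Matrix.trace, Matrix.mul_apply]
    rw [htr2, Complex.re_sum]
    refine Finset.sum_congr rfl fun k _ => ?_
    rw [Complex.re_sum]
    refine Finset.sum_congr rfl fun l _ => ?_
    have h1 : M1 k l * M2 l k
        = ((dd1 f lam k l * dd1 g lam k l * Complex.normSq ((Uᴴ * ν * U) k l) : ℝ) : ℂ) := by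
      show (dd1 f lam k l : ℂ) * ((Uᴴ * ν * U) k l)
          * ((dd1 g lam l k : ℂ) * ((Uᴴ * ν * U) l k)) = _
      rw [dd1_symm g, hherm k l]
      push_cast
      rw [show (dd1 f lam k l : ℂ) * ((Uᴴ * ν * U) k l)
          * ((dd1 g lam k l : ℂ) * (starRingEnd ℂ) ((Uᴴ * ν * U) k l))
          = (dd1 f lam k l : ℂ) * (dd1 g lam k l : ℂ)
            * (((Uᴴ * ν * U) k l) * (starRingEnd ℂ) ((Uᴴ * ν * U) k l)) by ring,
        Complex.mul_conj]
    rw [h1, Complex.ofReal_re]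
  rw [key_tr, key_tr]
  refine Finset.sum_le_sum fun k _ => Finset.sum_le_sum fun l _ => ?_
  refine mul_le_mul_of_nonneg_right ?_ (Complex.normSq_nonneg _)
  have := key_ineq s (lam k) (lam l) (hlam k) (hlam l)
  simpa only [dd1] using this



end
end
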